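/- (Multivariate Faà di Bruno via cumulant polynomials) If Y = (Y_1, ..., Y_n) has joint cumulants represented by the tuple (κ_1, ..., κ_n), and X_1, ..., X_n have cgf's K_{X_1}, ..., K_{X_n}, then ∑_{i > 0} E[C_{i,(X_1,...,X_n)}(κ_1, ..., κ_n)] z^i/i! = K_Y(K_{X_1}(z), ..., K_{X_n}(z)), i.e., the coefficients of the composition of the formal power series K_Y with the delta series K_{X_j} are given by evaluating the multivariable cumulant polynomials at the joint-cumulant symbols of Y. -/

import Mathlib

open scoped BigOperators

noncomputable section

abbrev MIdx (d : ℕ) := Fin d →₀ ℕ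

def mifact {d : ℕ} (i : MIdx d) : ℕ := ∏ k, (i k).factorial

def partFact {d : ℕ} (l : Multiset (MIdx d)) : ℕ := (l.map mifact).prod

def multFact {d : ℕ} (l : Multiset (MIdx d)) : ℕ :=
  ∏ x ∈ l.toFinset, (l.count x).factorial

/-- The cumulant generating series `K_X(z) = ∑_{i>0} c_i z^i/i!`. -/
def Kof {d : ℕ} (c : MIdx d → ℝ) : MvPowerSeries (Fin d) ℝ :=
  fun i => if i = 0 then 0 else c i / (mifact i : ℝ)

def degB {d : ℕ} (i : MIdx d) : ℕ := i.sum fun _ m => m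

/-- The composition `K_Y(K_1(z), …, K_n(z)) = ∑_{k>0} c_k(Y)/k! ∏_j K_j(z)^{k_j}` of the
formal power series `K_Y` (with coefficient sequence `cY`) with the delta series `K j`;
at the coefficient of `z^i` only multi-indices `k` with `|k| ≤ |i|` contribute. -/
def compSeries {n d : ℕ} (cY : (Fin n →₀ ℕ) → ℝ)
    (K : Fin n → MvPowerSeries (Fin d) ℝ) : MvPowerSeries (Fin d) ℝ :=
  fun i => ∑ k ∈ Finset.Iic (Finsupp.equivFunOnFinite.symm fun _ : Fin n => degB i),
    (if k = 0 then 0 else cY k / (∏ j, ((k j).factorial : ℝ))) *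
      MvPowerSeries.coeff i (∏ j, (K j) ^ (k j))

-- helpers
lemma degB_eq {d : ℕ} (x : MIdx d) : degB x = ∑ k, x k :=
  Finsupp.sum_fintype _ _ (fun _ => rfl)

lemma degB_add {d : ℕ} (x y : MIdx d) : degB (x + y) = degB x + degB y := by
  simp [degB_eq, Finset.sum_add_distrib]

lemma degB_pos {d : ℕ} {x : MIdx d} (hx : x ≠ 0) : 1 ≤ degB x := by
  rcases Nat.eq_zero_or_pos (degB x) with h | h
  · exfalso; apply hx; ext k
    rw [degB_eq] at h
    have := Finset.sum_eq_zero_iff.mp h k (Finset.mem_univ k)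
    simpa using this
  · exact h

lemma degB_multiset_sum {d : ℕ} (l : Multiset (MIdx d)) :
    degB l.sum = (l.map degB).sum := by
  induction l using Multiset.induction_on with
  | empty => simp [degB]
  | cons a s ih => simp [degB_add, ih]

lemma card_le_degB_sum {d : ℕ} {l : Multiset (MIdx d)} (h : ∀ x ∈ l, x ≠ (0 : MIdx d)) :
    Multiset.card l ≤ degB l.sum := by
  induction l using Multiset.induction_on with
  | empty => simp
  | cons a s ih =>
    simp only [Multiset.card_cons, Multiset.sum_cons, degB_add]
    have h1 : 1 ≤ degB a := degB_pos (h a (Multiset.mem_cons_self a s))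
    have h2 := ih (fun x hx => h x (Multiset.mem_cons_of_mem hx))
    omega

/-- multisets of card `m`, nonzero parts, summing to `t` -/
def Pset {d : ℕ} (t : MIdx d) (m : ℕ) : Finset (Multiset (MIdx d)) :=
  (((Finset.Iic t).sym m).image Sym.toMultiset).filter
    (fun l => l.sum = t ∧ (0 : MIdx d) ∉ l)

lemma mem_Pset {d : ℕ} {t : MIdx d} {m : ℕ} {l : Multiset (MIdx d)} :
    l ∈ Pset t m ↔ Multiset.card l = m ∧ l.sum = t ∧ (0 : MIdx d) ∉ l := by
  simp only [Pset, Finset.mem_filter, Finset.mem_image, Finset.mem_sym_iff]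
  constructor
  · rintro ⟨⟨s, hs, rfl⟩, h2, h3⟩
    exact ⟨s.2, h2, h3⟩
  · rintro ⟨h1, h2, h3⟩
    refine ⟨⟨⟨l, h1⟩, ?_, rfl⟩, h2, h3⟩
    intro a ha
    rw [Finset.mem_Iic]
    rw [← h2]
    exact Multiset.le_sum_of_mem ha

lemma multFact_prod_subset {d : ℕ} {l : Multiset (MIdx d)} {s : Finset (MIdx d)}
    (h : l.toFinset ⊆ s) : multFact l = ∏ x ∈ s, (l.count x).factorial := by
  rw [multFact]
  apply Finset.prod_subset h
  intro x _ hx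
  simp only [Multiset.mem_toFinset] at hx
  rw [Multiset.count_eq_zero_of_notMem hx]
  rfl

lemma multFact_erase {d : ℕ} {μ : Multiset (MIdx d)} {a : MIdx d} (ha : a ∈ μ) :
    multFact μ = μ.count a * multFact (μ.erase a) := by
  have hsub : (μ.erase a).toFinset ⊆ μ.toFinset :=
    Multiset.toFinset_subset.mpr (Multiset.erase_subset a μ)
  rw [multFact_prod_subset hsub, multFact]
  have hmem : a ∈ μ.toFinset := Multiset.mem_toFinset.mpr ha
  rw [← Finset.mul_prod_erase _ _ hmem, ← Finset.mul_prod_erase _ _ hmem, ← mul_assoc]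
  congr 1
  · rw [Multiset.count_erase_self]
    exact (Nat.mul_factorial_pred (Multiset.count_pos.mpr ha).ne').symm
  · apply Finset.prod_congr rfl
    intro x hx
    rw [Multiset.count_erase_of_ne (Finset.ne_of_mem_erase hx)]

lemma multFact_pos {d : ℕ} (l : Multiset (MIdx d)) : 0 < multFact l :=
  Finset.prod_pos (fun x _ => Nat.factorial_pos _)

lemma prodmap_cons_erase {d : ℕ} (f : MIdx d → ℝ) {μ : Multiset (MIdx d)} {a : MIdx d}
    (ha : a ∈ μ) : (μ.map f).prod = f a * ((μ.erase a).map f).prod := by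
  conv_lhs => rw [← Multiset.cons_erase ha]
  rw [Multiset.map_cons, Multiset.prod_cons]

lemma Pset_zero {d : ℕ} (t : MIdx d) :
    Pset t 0 = if t = 0 then {(0 : Multiset (MIdx d))} else ∅ := by
  ext l
  rw [mem_Pset]
  split_ifs with h
  · subst h
    simp only [Finset.mem_singleton]
    constructor
    · rintro ⟨h1, -, -⟩; exact Multiset.card_eq_zero.mp h1
    · rintro rfl; simp
  · simp only [Finset.notMem_empty, iff_false]
    rintro ⟨h1, h2, -⟩
    exact h (by rw [← h2, Multiset.card_eq_zero.mp h1, Multiset.sum_zero])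

lemma coeff_Kof_pow {d : ℕ} (c : MIdx d → ℝ) (m : ℕ) (t : MIdx d) :
    MvPowerSeries.coeff t (Kof c ^ m) =
      ∑ l ∈ Pset t m, (m.factorial : ℝ) / (multFact l : ℝ) *
        ((l.map (fun x => c x / (mifact x : ℝ))).prod) := by
  induction m generalizing t with
  | zero =>
    rw [pow_zero, Pset_zero]
    split_ifs with h
    · subst h; simp [MvPowerSeries.coeff_one, multFact]
    · simp [MvPowerSeries.coeff_one, h]
  | succ m ih =>
    rw [pow_succ', MvPowerSeries.coeff_mul]
    have hcoeff : ∀ a : MIdx d, MvPowerSeries.coeff a (Kof c) =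
        if a = 0 then 0 else c a / (mifact a : ℝ) := fun a => rfl
    -- rewrite LHS into a filtered sum
    have lhs_eq : ∑ p ∈ Finset.HasAntidiagonal.antidiagonal t,
          MvPowerSeries.coeff p.1 (Kof c) * MvPowerSeries.coeff p.2 (Kof c ^ m)
        = ∑ p ∈ (Finset.HasAntidiagonal.antidiagonal t).filter (fun p => p.1 ≠ 0),
            ∑ l ∈ Pset p.2 m, (c p.1 / (mifact p.1 : ℝ)) *
              ((m.factorial : ℝ) / (multFact l : ℝ) *
                ((l.map (fun x => c x / (mifact x : ℝ))).prod)) := by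
      rw [Finset.sum_filter]
      apply Finset.sum_congr rfl
      intro p _
      rw [hcoeff, ih]
      by_cases h : p.1 = 0
      · simp [h]
      · simp only [if_neg h, ne_eq, h, not_false_eq_true, if_pos, if_false]
        rw [Finset.mul_sum]
    rw [lhs_eq, Finset.sum_sigma']
    -- rewrite RHS into a sigma sum
    have rhs_eq : ∑ l ∈ Pset t (m + 1), ((m+1).factorial : ℝ) / (multFact l : ℝ) *
          ((l.map (fun x => c x / (mifact x : ℝ))).prod)
        = ∑ μ ∈ Pset t (m+1), ∑ a ∈ μ.toFinset,
            (c a / (mifact a : ℝ)) * ((m.factorial : ℝ) / (multFact (μ.erase a) : ℝ) *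
              (((μ.erase a).map (fun x => c x / (mifact x : ℝ))).prod)) := by
      apply Finset.sum_congr rfl
      intro μ hμ
      obtain ⟨hcard, hsum, h0⟩ := mem_Pset.mp hμ
      have step : ∀ a ∈ μ.toFinset,
          (c a / (mifact a : ℝ)) * ((m.factorial : ℝ) / (multFact (μ.erase a) : ℝ) *
            (((μ.erase a).map (fun x => c x / (mifact x : ℝ))).prod))
          = (μ.count a : ℝ) * ((m.factorial : ℝ) / (multFact μ : ℝ) *
              ((μ.map (fun x => c x / (mifact x : ℝ))).prod)) := by
        intro a ha
        rw [Multiset.mem_toFinset] at ha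
        rw [prodmap_cons_erase _ ha]
        have hmf : (multFact μ : ℝ) = (μ.count a : ℝ) * (multFact (μ.erase a) : ℝ) := by
          rw [← Nat.cast_mul, multFact_erase ha]
        have h1 : (multFact (μ.erase a) : ℝ) ≠ 0 :=
          Nat.cast_ne_zero.mpr (multFact_pos _).ne'
        have h2 : (μ.count a : ℝ) ≠ 0 :=
          Nat.cast_ne_zero.mpr (Multiset.count_pos.mpr ha).ne'
        have key : (Multiset.count a μ : ℝ) *
            ((m.factorial : ℝ) / ((Multiset.count a μ : ℝ) * (multFact (μ.erase a) : ℝ)))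
            = (m.factorial : ℝ) / (multFact (μ.erase a) : ℝ) := by
          rw [mul_div_assoc', mul_div_mul_left _ _ h2]
        rw [hmf, ← mul_assoc (Multiset.count a μ : ℝ), key]
        ring
      rw [Finset.sum_congr rfl step, ← Finset.sum_mul, ← Nat.cast_sum,
        Multiset.toFinset_sum_count_eq, hcard]
      push_cast [Nat.factorial_succ]
      field_simp
    rw [rhs_eq, Finset.sum_sigma']
    -- the bijection
    apply Finset.sum_nbij' (i := fun x => ⟨x.1.1 ::ₘ x.2, x.1.1⟩)
      (j := fun y => ⟨(y.2, (y.1.erase y.2).sum), y.1.erase y.2⟩)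
    · rintro ⟨⟨a, b⟩, l⟩ hx
      simp only [Finset.mem_sigma, Finset.mem_filter, Finset.HasAntidiagonal.mem_antidiagonal] at hx
      obtain ⟨⟨hab, ha⟩, hl⟩ := hx
      obtain ⟨hcard, hsum, h0⟩ := mem_Pset.mp hl
      simp only [Finset.mem_sigma]
      constructor
      · rw [mem_Pset]
        refine ⟨by simp [hcard], by simp [Multiset.sum_cons, hsum, hab], ?_⟩
        intro hmem
        rcases Multiset.mem_cons.mp hmem with h | h
        · exact ha h.symm
        · exact h0 h
      · simp
    · rintro ⟨μ, a⟩ hy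
      simp only [Finset.mem_sigma] at hy
      obtain ⟨hμ, ha⟩ := hy
      rw [Multiset.mem_toFinset] at ha
      obtain ⟨hcard, hsum, h0⟩ := mem_Pset.mp hμ
      simp only [Finset.mem_sigma, Finset.mem_filter, Finset.HasAntidiagonal.mem_antidiagonal]
      have hce := Multiset.cons_erase ha
      constructor
      · constructor
        · rw [← hsum]
          conv_rhs => rw [← hce]
          rw [Multiset.sum_cons]
        · intro h; exact h0 (h ▸ ha)
      · rw [mem_Pset]
        refine ⟨?_, rfl, fun h => h0 (Multiset.mem_of_mem_erase h)⟩
        have := congrArg Multiset.card hce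
        simp only [Multiset.card_cons] at this
        omega
    · rintro ⟨⟨a, b⟩, l⟩ hx
      simp only [Finset.mem_sigma, Finset.mem_filter, Finset.HasAntidiagonal.mem_antidiagonal] at hx
      obtain ⟨⟨hab, ha⟩, hl⟩ := hx
      obtain ⟨hcard, hsum, h0⟩ := mem_Pset.mp hl
      simp only [Multiset.erase_cons_head]
      simp [hsum, hab]
    · rintro ⟨μ, a⟩ hy
      simp only [Finset.mem_sigma] at hy
      obtain ⟨hμ, ha⟩ := hy
      rw [Multiset.mem_toFinset] at ha
      simp [Multiset.cons_erase ha]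
    · rintro ⟨⟨a, b⟩, l⟩ hx
      simp only [Multiset.erase_cons_head]

lemma degB_finset_sum {d : ℕ} {ι : Type*} (s : Finset ι) (h : ι → MIdx d) :
    degB (∑ j ∈ s, h j) = ∑ j ∈ s, degB (h j) := by
  classical
  induction s using Finset.induction_on with
  | empty => simp [degB]
  | insert a s ha ih => simp [Finset.sum_insert ha, degB_add, ih]

/-- Multivariate Faà di Bruno via cumulant polynomials: if `Y = (Y_1,…,Y_n)`
has joint cumulants `cY` and `X_1, …, X_n` have cumulant sequences `cX j` (cgf's
`K_{X_j}`), then the coefficients of the composition `K_Y(K_{X_1}(z), …, K_{X_n}(z))` are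
the umbral evaluations `E[C_{i,(X_1,…,X_n)}(κ_1,…,κ_n)]`, i.e.
`i! ∑_{(λ_1,…,λ_n)} cY(ℓ(λ_1),…,ℓ(λ_n)) ∏_j (∏ c_{λ_j})/(m(λ_j)! λ_j!)`, the sum over
tuples of multi-index partitions with total sum `i`. -/
theorem faa_di_bruno_cumulant_polynomials {n d : ℕ}
    (cY : (Fin n →₀ ℕ) → ℝ) (cX : Fin n → MIdx d → ℝ)
    (Q : MIdx d → Finset (Fin n → Multiset (MIdx d)))
    (hQ : ∀ (i : MIdx d) (f : Fin n → Multiset (MIdx d)),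
      f ∈ Q i ↔ ((∀ k, ∀ x ∈ f k, x ≠ (0 : MIdx d)) ∧ ∑ k, (f k).sum = i))
    (i : MIdx d) (hi : i ≠ 0) :
    (mifact i : ℝ) * ∑ f ∈ Q i,
        cY (Finsupp.equivFunOnFinite.symm fun k => (Multiset.card (f k))) *
          ∏ k, (((f k).map (cX k)).prod) / ((multFact (f k) : ℝ) * (partFact (f k) : ℝ))
      = (mifact i : ℝ) * MvPowerSeries.coeff i (compSeries cY (fun j => Kof (cX j))) := by
  congr 1
  rw [MvPowerSeries.coeff_apply]
  show _ = ∑ k ∈ Finset.Iic (Finsupp.equivFunOnFinite.symm fun _ : Fin n => degB i),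
    (if k = 0 then 0 else cY k / (∏ j, ((k j).factorial : ℝ))) *
      MvPowerSeries.coeff i (∏ j, (Kof (cX j)) ^ (k j))
  -- expand each coefficient
  have expand : ∀ k : Fin n →₀ ℕ,
      MvPowerSeries.coeff i (∏ j, (Kof (cX j)) ^ (k j))
      = ∑ l ∈ Finset.finsuppAntidiag Finset.univ i,
          ∑ g ∈ Fintype.piFinset (fun j => Pset (l j) (k j)),
            ∏ j, (((k j).factorial : ℝ) / (multFact (g j) : ℝ) *
              (((g j).map (fun x => cX j x / (mifact x : ℝ))).prod)) := by
    intro k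
    rw [MvPowerSeries.coeff_prod]
    apply Finset.sum_congr rfl
    intro l _
    rw [Finset.prod_congr rfl (fun j _ => coeff_Kof_pow (cX j) (k j) (l j)),
      Finset.prod_univ_sum]
  -- drop the k = 0 term
  have filter_eq : ∑ k ∈ Finset.Iic (Finsupp.equivFunOnFinite.symm fun _ : Fin n => degB i),
      (if k = 0 then 0 else cY k / (∏ j, ((k j).factorial : ℝ))) *
        MvPowerSeries.coeff i (∏ j, (Kof (cX j)) ^ (k j))
      = ∑ k ∈ (Finset.Iic (Finsupp.equivFunOnFinite.symm fun _ : Fin n => degB i)).filter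
            (fun k => k ≠ 0),
          ∑ l ∈ Finset.finsuppAntidiag Finset.univ i,
            ∑ g ∈ Fintype.piFinset (fun j => Pset (l j) (k j)),
              (cY k / (∏ j, ((k j).factorial : ℝ))) *
                ∏ j, (((k j).factorial : ℝ) / (multFact (g j) : ℝ) *
                  (((g j).map (fun x => cX j x / (mifact x : ℝ))).prod)) := by
    rw [Finset.sum_filter]
    apply Finset.sum_congr rfl
    intro k _
    by_cases h : k = 0
    · simp [h]
    · simp only [if_neg h, ne_eq, h, not_false_eq_true, if_pos]
      rw [expand, Finset.mul_sum]
      apply Finset.sum_congr rfl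
      intro l _
      rw [Finset.mul_sum]
      simp
  rw [filter_eq, Finset.sum_sigma', Finset.sum_sigma']
  symm
  apply Finset.sum_nbij' (i := fun x => x.2)
    (j := fun f => ⟨⟨Finsupp.equivFunOnFinite.symm fun j => Multiset.card (f j),
      Finsupp.equivFunOnFinite.symm fun j => (f j).sum⟩, f⟩)
  · rintro ⟨⟨k, l⟩, g⟩ hx
    simp only [Finset.mem_sigma, Finset.mem_filter, Finset.mem_finsuppAntidiag,
      Fintype.mem_piFinset] at hx
    obtain ⟨⟨⟨-, -⟩, hlsum, -⟩, hg⟩ := hx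
    rw [hQ]
    constructor
    · intro j x hxj
      obtain ⟨-, -, h0⟩ := mem_Pset.mp (hg j)
      intro hx0; subst hx0; exact h0 hxj
    · have : ∀ j, (g j).sum = l j := fun j => (mem_Pset.mp (hg j)).2.1
      calc ∑ j, (g j).sum = ∑ j, l j := by simp [this]
        _ = i := hlsum
  · rintro f hf
    rw [hQ] at hf
    obtain ⟨hne, hsum⟩ := hf
    have h0notmem : ∀ j, (0 : MIdx d) ∉ f j := fun j h => hne j 0 h rfl
    simp only [Finset.mem_sigma, Finset.mem_filter, Finset.mem_finsuppAntidiag,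
      Fintype.mem_piFinset, Finset.mem_Iic]
    refine ⟨⟨⟨?_, ?_⟩, ?_, ?_⟩, ?_⟩
    · rw [Finsupp.le_def]
      intro j
      simp only [Finsupp.equivFunOnFinite_symm_apply_apply]
      calc Multiset.card (f j) ≤ degB (f j).sum := card_le_degB_sum (fun x hx => hne j x hx)
        _ ≤ ∑ j', degB (f j').sum := Finset.single_le_sum (f := fun j' => degB (f j').sum)
              (fun _ _ => Nat.zero_le _) (Finset.mem_univ j)
        _ = degB i := by rw [← degB_finset_sum, hsum]
    · intro hk0
      apply hi
      have hcards : ∀ j, Multiset.card (f j) = 0 := by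
        intro j
        have := DFunLike.congr_fun hk0 j
        simpa using this
      have : ∀ j, f j = 0 := fun j => Multiset.card_eq_zero.mp (hcards j)
      rw [← hsum]
      simp [this]
    · rw [← hsum]
      apply Finset.sum_congr rfl
      intro j _
      simp
    · exact Finset.subset_univ _
    · intro j
      rw [mem_Pset]
      exact ⟨by simp, by simp, h0notmem j⟩
  · rintro ⟨⟨k, l⟩, g⟩ hx
    simp only [Finset.mem_sigma, Finset.mem_filter, Finset.mem_finsuppAntidiag,
      Fintype.mem_piFinset] at hx
    obtain ⟨⟨⟨-, -⟩, -, -⟩, hg⟩ := hx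
    have hk : (Finsupp.equivFunOnFinite.symm fun j => Multiset.card (g j)) = k := by
      rw [Equiv.symm_apply_eq]
      funext j
      exact (mem_Pset.mp (hg j)).1
    have hl : (Finsupp.equivFunOnFinite.symm fun j => (g j).sum) = l := by
      rw [Equiv.symm_apply_eq]
      funext j
      exact (mem_Pset.mp (hg j)).2.1
    simp only [hk, hl]
  · rintro f _
    rfl
  · rintro ⟨⟨k, l⟩, g⟩ hx
    simp only [Finset.mem_sigma, Finset.mem_filter, Finset.mem_finsuppAntidiag,
      Fintype.mem_piFinset] at hx
    obtain ⟨⟨⟨-, hk0⟩, -, -⟩, hg⟩ := hx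
    have hk : (Finsupp.equivFunOnFinite.symm fun j => Multiset.card (g j)) = k := by
      rw [Equiv.symm_apply_eq]
      funext j
      exact (mem_Pset.mp (hg j)).1
    rw [hk]
    -- algebra
    have hterm : ∀ j, ((k j).factorial : ℝ) / (multFact (g j) : ℝ) *
        (((g j).map (fun x => cX j x / (mifact x : ℝ))).prod)
        = ((k j).factorial : ℝ) *
          ((((g j).map (cX j)).prod) / ((multFact (g j) : ℝ) * (partFact (g j) : ℝ))) := by
      intro j
      have hdiv : (((g j).map (fun x => cX j x / (mifact x : ℝ))).prod)
          = (((g j).map (cX j)).prod) / ((partFact (g j) : ℝ)) := by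
        rw [Multiset.prod_map_div]
        congr 1
        rw [partFact, Nat.cast_multiset_prod, Multiset.map_map]
        rfl
      rw [hdiv, div_mul_div_comm, mul_div_assoc]
    have hfne : (∏ j, ((k j).factorial : ℝ)) ≠ 0 :=
      Finset.prod_ne_zero_iff.mpr (fun j _ => Nat.cast_ne_zero.mpr (Nat.factorial_pos _).ne')
    dsimp only
    rw [Finset.prod_congr rfl (fun j _ => hterm j), Finset.prod_mul_distrib, ← mul_assoc,
      div_mul_cancel₀ _ hfne]
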